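/- Let f(n) denote the maximum number of sets of cardinality at least 2 in a 2-laminar family of subsets of [n]. Then for all n > 2, f(n)/binom(n,2) ≤ 1/binom(n,2) + max_{2 ≤ k < n} f(k)/binom(k,2). -/

import Mathlib

/-- `f n` is the maximum number of sets of cardinality at least `2` in a `2`-laminar
family of subsets of `[n]`. -/
noncomputable def f (n : ℕ) : ℕ :=
  sSup {m | ∃ F : Finset (Finset (Fin n)),
    (∀ A ∈ F, ∀ B ∈ F, 2 ≤ (A ∩ B).card → A ⊆ B ∨ B ⊆ A) ∧
    (∀ A ∈ F, 2 ≤ A.card) ∧ F.card = m}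

open Finset

lemma f_bddAbove (n : ℕ) : BddAbove {m | ∃ F : Finset (Finset (Fin n)),
    (∀ A ∈ F, ∀ B ∈ F, 2 ≤ (A ∩ B).card → A ⊆ B ∨ B ⊆ A) ∧
    (∀ A ∈ F, 2 ≤ A.card) ∧ F.card = m} := by
  refine ⟨Fintype.card (Finset (Fin n)), ?_⟩
  rintro m ⟨F, -, -, rfl⟩
  exact F.card_le_univ

lemma le_f {n : ℕ} {F : Finset (Finset (Fin n))}
    (h1 : ∀ A ∈ F, ∀ B ∈ F, 2 ≤ (A ∩ B).card → A ⊆ B ∨ B ⊆ A)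
    (h2 : ∀ A ∈ F, 2 ≤ A.card) : F.card ≤ f n :=
  le_csSup (f_bddAbove n) ⟨F, h1, h2, rfl⟩

lemma f_spec (n : ℕ) : ∃ F : Finset (Finset (Fin n)),
    (∀ A ∈ F, ∀ B ∈ F, 2 ≤ (A ∩ B).card → A ⊆ B ∨ B ⊆ A) ∧
    (∀ A ∈ F, 2 ≤ A.card) ∧ F.card = f n := by
  refine Nat.sSup_mem ?_ (f_bddAbove n)
  exact ⟨0, ∅, by simp, by simp, by simp⟩

/-- Restriction: a 2-laminar family of subsets of `A` has size at most `f A.card`. -/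
lemma restrict_le {n : ℕ} (A : Finset (Fin n)) (G : Finset (Finset (Fin n)))
    (hlam : ∀ C ∈ G, ∀ D ∈ G, 2 ≤ (C ∩ D).card → C ⊆ D ∨ D ⊆ C)
    (hcard : ∀ C ∈ G, 2 ≤ C.card) (hsub : ∀ C ∈ G, C ⊆ A) :
    G.card ≤ f A.card := by
  rcases G.eq_empty_or_nonempty with rfl | ⟨C0, hC0⟩
  · simp
  have hA : A.Nonempty := by
    have h2 := hcard C0 hC0
    obtain ⟨x, hx⟩ := Finset.card_pos.mp (lt_of_lt_of_le (by norm_num) h2)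
    exact ⟨x, hsub C0 hC0 hx⟩
  set e := A.equivFin with he
  set φ : Fin n → Fin A.card :=
    fun x => if h : x ∈ A then e ⟨x, h⟩ else e ⟨hA.choose, hA.choose_spec⟩ with hφ
  have hinj : ∀ x ∈ A, ∀ y ∈ A, φ x = φ y → x = y := by
    intro x hx y hy hxy
    simp only [hφ, dif_pos hx, dif_pos hy] at hxy
    exact congrArg Subtype.val (e.injective hxy)
  have himg_inter : ∀ C D : Finset (Fin n), C ⊆ A → D ⊆ A →
      (C.image φ) ∩ (D.image φ) = (C ∩ D).image φ := by
    intro C D hC hD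
    ext z
    simp only [mem_inter, mem_image]
    constructor
    · rintro ⟨⟨x, hx, rfl⟩, ⟨y, hy, hyx⟩⟩
      have : y = x := hinj y (hD hy) x (hC hx) hyx
      exact ⟨x, ⟨hx, this ▸ hy⟩, rfl⟩
    · rintro ⟨x, hx, rfl⟩
      exact ⟨⟨x, hx.1, rfl⟩, ⟨x, hx.2, rfl⟩⟩
  have hcard_img : ∀ C : Finset (Fin n), C ⊆ A → (C.image φ).card = C.card := by
    intro C hC
    exact Finset.card_image_of_injOn (fun x hx y hy => hinj x (hC hx) y (hC hy))
  set G' : Finset (Finset (Fin A.card)) := G.image (fun C => C.image φ) with hG'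
  have hG'card : G'.card = G.card := by
    apply Finset.card_image_of_injOn
    intro C hC D hD hCD
    simp only [Finset.mem_coe] at hC hD
    have hCD' : C.image φ = D.image φ := hCD
    apply Finset.Subset.antisymm
    · intro x hx
      have : φ x ∈ D.image φ := hCD' ▸ Finset.mem_image_of_mem φ hx
      obtain ⟨y, hy, hyx⟩ := Finset.mem_image.mp this
      exact (hinj y (hsub D hD hy) x (hsub C hC hx) hyx) ▸ hy
    · intro x hx
      have : φ x ∈ C.image φ := hCD'.symm ▸ Finset.mem_image_of_mem φ hx
      obtain ⟨y, hy, hyx⟩ := Finset.mem_image.mp this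
      exact (hinj y (hsub C hC hy) x (hsub D hD hx) hyx) ▸ hy
  have h1 : ∀ A' ∈ G', ∀ B' ∈ G', 2 ≤ (A' ∩ B').card → A' ⊆ B' ∨ B' ⊆ A' := by
    rintro A' hA' B' hB' hAB
    obtain ⟨C, hC, rfl⟩ := Finset.mem_image.mp hA'
    obtain ⟨D, hD, rfl⟩ := Finset.mem_image.mp hB'
    rw [himg_inter C D (hsub C hC) (hsub D hD),
        hcard_img _ (fun x hx => hsub C hC (mem_inter.mp hx).1)] at hAB
    rcases hlam C hC D hD hAB with h | h
    · exact Or.inl (Finset.image_subset_image h)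
    · exact Or.inr (Finset.image_subset_image h)
  have h2 : ∀ A' ∈ G', 2 ≤ A'.card := by
    rintro A' hA'
    obtain ⟨C, hC, rfl⟩ := Finset.mem_image.mp hA'
    rw [hcard_img C (hsub C hC)]
    exact hcard C hC
  calc G.card = G'.card := hG'card.symm
  _ ≤ f A.card := le_f h1 h2

lemma f_key_bound (n : ℕ) (hn : 2 < n) (M : ℝ) (hM0 : 0 ≤ M)
    (hM : ∀ k ∈ Finset.Ico 2 n, (f k : ℝ) / (k.choose 2 : ℝ) ≤ M) :
    (f n : ℝ) ≤ 1 + (n.choose 2 : ℝ) * M := by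
  obtain ⟨F, hlam, hcard, hFcard⟩ := f_spec n
  set F' := F.erase univ with hF'
  have hF'sub : F' ⊆ F := Finset.erase_subset _ _
  have hF'card : F.card ≤ F'.card + 1 := by
    have h := Finset.pred_card_le_card_erase (s := F) (a := univ)
    rw [← hF'] at h
    omega
  have hproper : ∀ A ∈ F', 2 ≤ A.card ∧ A.card < n := by
    intro A hA
    refine ⟨hcard A (hF'sub hA), ?_⟩
    have h1 : A ⊆ univ := Finset.subset_univ A
    have h2 : A ≠ univ := Finset.ne_of_mem_erase hA
    have := Finset.card_le_card h1
    rcases lt_or_eq_of_le this with h | h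
    · simpa using h
    · exact absurd (Finset.eq_of_subset_of_card_le h1 (le_of_eq h.symm)) h2
  classical
  set Mx := F'.filter (fun A => ∀ B ∈ F', A ⊆ B → A = B) with hMx
  have hmaxex : ∀ C ∈ F', ∃ A ∈ Mx, C ⊆ A := by
    intro C hC
    obtain ⟨A, hA, hAmax⟩ : ∃ A ∈ F'.filter (fun B => C ⊆ B),
        ∀ x ∈ F'.filter (fun B => C ⊆ B), ¬ A < x := by
      obtain ⟨A, hA⟩ := Finset.exists_maximal (s := F'.filter (fun B => C ⊆ B))
        ⟨C, Finset.mem_filter.mpr ⟨hC, Finset.Subset.refl C⟩⟩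
      exact ⟨A, hA.prop, fun x hx hlt => hlt.not_ge (hA.2 hx hlt.le)⟩
    rw [Finset.mem_filter] at hA
    refine ⟨A, Finset.mem_filter.mpr ⟨hA.1, ?_⟩, hA.2⟩
    intro B hB hAB
    by_contra hne
    exact hAmax B (Finset.mem_filter.mpr ⟨hB, hA.2.trans hAB⟩) (lt_of_le_of_ne hAB hne)
  have hdisj : ∀ A ∈ Mx, ∀ B ∈ Mx, A ≠ B → (A ∩ B).card ≤ 1 := by
    intro A hA B hB hne
    by_contra h
    push_neg at h
    rw [Finset.mem_filter] at hA hB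
    rcases hlam A (hF'sub hA.1) B (hF'sub hB.1) h with hsub | hsub
    · exact hne (hA.2 B hB.1 hsub)
    · exact hne ((hB.2 A hA.1 hsub).symm)
  set g : Finset (Fin n) → Finset (Fin n) :=
    fun C => if h : ∃ A ∈ Mx, C ⊆ A then h.choose else ∅ with hg
  have hgspec : ∀ C ∈ F', g C ∈ Mx ∧ C ⊆ g C := by
    intro C hC
    have h := hmaxex C hC
    simp only [hg, dif_pos h]
    exact h.choose_spec
  have hfib : F'.card = ∑ A ∈ Mx, (F'.filter (fun C => g C = A)).card :=
    Finset.card_eq_sum_card_fiberwise (fun C hC => (hgspec C hC).1)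
  have hfib_le : ∀ A ∈ Mx, (F'.filter (fun C => g C = A)).card ≤ f A.card := by
    intro A hA
    apply restrict_le
    · intro C hC D hD
      rw [Finset.mem_filter] at hC hD
      exact hlam C (hF'sub hC.1) D (hF'sub hD.1)
    · intro C hC
      rw [Finset.mem_filter] at hC
      exact hcard C (hF'sub hC.1)
    · intro C hC
      rw [Finset.mem_filter] at hC
      exact hC.2 ▸ (hgspec C hC.1).2
  -- sum of pair counts
  have hsum : ∑ A ∈ Mx, A.card.choose 2 ≤ n.choose 2 := by
    have hd : ∀ A ∈ Mx, ∀ B ∈ Mx, A ≠ B →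
        Disjoint (Finset.powersetCard 2 A) (Finset.powersetCard 2 B) := by
      intro A hA B hB hne
      rw [Finset.disjoint_left]
      intro P hPA hPB
      rw [Finset.mem_powersetCard] at hPA hPB
      have : P ⊆ A ∩ B := Finset.subset_inter hPA.1 hPB.1
      have := Finset.card_le_card this
      have := hdisj A hA B hB hne
      omega
    calc ∑ A ∈ Mx, A.card.choose 2
        = ∑ A ∈ Mx, (Finset.powersetCard 2 A).card := by
          refine Finset.sum_congr rfl fun A _ => ?_
          rw [Finset.card_powersetCard]
      _ = (Mx.biUnion (Finset.powersetCard 2)).card := (Finset.card_biUnion hd).symm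
      _ ≤ (Finset.powersetCard 2 (univ : Finset (Fin n))).card := by
          apply Finset.card_le_card
          intro P hP
          rw [Finset.mem_biUnion] at hP
          obtain ⟨A, _, hPA⟩ := hP
          rw [Finset.mem_powersetCard] at hPA ⊢
          exact ⟨Finset.subset_univ P, hPA.2⟩
      _ = n.choose 2 := by rw [Finset.card_powersetCard]; simp
  -- real bound per maximal set
  have hreal : ∀ A ∈ Mx, (f A.card : ℝ) ≤ (A.card.choose 2 : ℝ) * M := by
    intro A hA
    have hp := hproper A (Finset.mem_filter.mp hA).1
    have hk : A.card ∈ Finset.Ico 2 n := Finset.mem_Ico.mpr ⟨hp.1, hp.2⟩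
    have hpos : (0 : ℝ) < (A.card.choose 2 : ℝ) := by
      have : 0 < A.card.choose 2 := Nat.choose_pos hp.1
      exact_mod_cast this
    have := hM A.card hk
    rw [div_le_iff₀ hpos] at this
    linarith
  have hfinal : (F.card : ℝ) ≤ 1 + ∑ A ∈ Mx, (A.card.choose 2 : ℝ) * M := by
    have h1 : (F.card : ℝ) ≤ 1 + (F'.card : ℝ) := by
      exact_mod_cast (by omega : F.card ≤ 1 + F'.card)
    have h2 : (F'.card : ℝ) = ∑ A ∈ Mx, ((F'.filter (fun C => g C = A)).card : ℝ) := by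
      exact_mod_cast hfib
    have h3 : ∑ A ∈ Mx, ((F'.filter (fun C => g C = A)).card : ℝ) ≤
        ∑ A ∈ Mx, (A.card.choose 2 : ℝ) * M := by
      apply Finset.sum_le_sum
      intro A hA
      calc ((F'.filter (fun C => g C = A)).card : ℝ) ≤ (f A.card : ℝ) := by
            exact_mod_cast hfib_le A hA
        _ ≤ (A.card.choose 2 : ℝ) * M := hreal A hA
    linarith
  have hsum' : ∑ A ∈ Mx, (A.card.choose 2 : ℝ) * M ≤ (n.choose 2 : ℝ) * M := by
    rw [← Finset.sum_mul]
    apply mul_le_mul_of_nonneg_right _ hM0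
    exact_mod_cast hsum
  rw [← hFcard]
  linarith

/-- Recursive bound: for n > 2,
f(n)/C(n,2) ≤ 1/C(n,2) + max_{2 ≤ k < n} f(k)/C(k,2). -/
theorem f_recursive_bound (n : ℕ) (hn : 2 < n) (hne : (Finset.Ico 2 n).Nonempty) :
    (f n : ℝ) / (n.choose 2 : ℝ) ≤
      1 / (n.choose 2 : ℝ) +
        (Finset.Ico 2 n).sup' hne (fun k => (f k : ℝ) / (k.choose 2 : ℝ)) := by
  set M := (Finset.Ico 2 n).sup' hne (fun k => (f k : ℝ) / (k.choose 2 : ℝ)) with hMdef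
  have h2mem : (2 : ℕ) ∈ Finset.Ico 2 n := Finset.mem_Ico.mpr ⟨le_refl 2, hn⟩
  have hM0 : 0 ≤ M := le_trans (by positivity)
    (Finset.le_sup' (fun k => (f k : ℝ) / (k.choose 2 : ℝ)) h2mem)
  have hM : ∀ k ∈ Finset.Ico 2 n, (f k : ℝ) / (k.choose 2 : ℝ) ≤ M :=
    fun k hk => Finset.le_sup' (fun k => (f k : ℝ) / (k.choose 2 : ℝ)) hk
  have hkey := f_key_bound n hn M hM0 hM
  have hpos : (0 : ℝ) < (n.choose 2 : ℝ) := by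
    have : 0 < n.choose 2 := Nat.choose_pos (by omega)
    exact_mod_cast this
  rw [div_le_iff₀ hpos]
  have : (1 / (n.choose 2 : ℝ) + M) * (n.choose 2 : ℝ) = 1 + (n.choose 2 : ℝ) * M := by
    field_simp
  rw [this]
  exact hkey
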